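/- Integral decay estimate for g_{r²}: let m ≥ 1 be an integer, γ ≥ 0 and α > 0. There is a constant C, depending only on m, γ and α, such that for every r > 0 and every integer j ≥ 1, ∫_0^∞ |g_{r²}(t)| e^{−α 4^{j} r²/t} t^{−γ/2} dt/√t ≤ C r^{−γ} 2^{−j(2m+γ)}. -/

import Mathlib

set_option maxHeartbeats 1000000


open MeasureTheory

noncomputable section

/-- The kernel `g_s(t) = Σ_{k=0}^m binom(m,k)(−1)^k 1_{t > ks} (t − ks)^{−1/2}`. -/
noncomputable def gker (m : ℕ) (s t : ℝ) : ℝ :=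
  ∑ k ∈ Finset.range (m + 1), (m.choose k : ℝ) * (-1) ^ k *
    (if (k : ℝ) * s < t then (Real.sqrt (t - (k : ℝ) * s))⁻¹ else 0)

/-! ### Auxiliary lemmas -/

/-- Iterated finite difference of `x ↦ x^(-a)`. -/
noncomputable def Dsum (n : ℕ) (a s t : ℝ) : ℝ :=
  ∑ k ∈ Finset.range (n+1), (n.choose k : ℝ) * (-1)^k * (t - k*s) ^ (-a)

lemma Dsum_succ (n : ℕ) (a s t : ℝ) :
    Dsum (n+1) a s t = Dsum n a s t - Dsum n a s (t - s) := by
  unfold Dsum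
  have key : ∀ k ∈ Finset.range (n+1),
      ((n+1).choose (k+1) : ℝ) * (-1)^(k+1) * (t - (k+1 : ℕ)*s) ^ (-a)
      = ((n.choose (k+1) : ℝ) * (-1)^(k+1) * (t - (k+1 : ℕ)*s) ^ (-a))
        + (-((n.choose k : ℝ) * (-1)^k * ((t - s) - k*s) ^ (-a))) := by
    intro k _
    have h2 : t - ((k+1 : ℕ) : ℝ)*s = (t - s) - (k : ℝ)*s := by push_cast; ring
    rw [Nat.choose_succ_succ, h2]; push_cast; ring
  rw [Finset.sum_range_succ' _ (n+1), Finset.sum_congr rfl key, Finset.sum_add_distrib,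
    Finset.sum_neg_distrib]
  have e1 : ∑ k ∈ Finset.range (n+1), ((n.choose (k+1) : ℝ) * (-1)^(k+1) * (t - (k+1 : ℕ)*s) ^ (-a))
      = (∑ k ∈ Finset.range (n+1), (n.choose k : ℝ) * (-1)^k * (t - k*s) ^ (-a))
        - ((n.choose 0 : ℝ) * (-1)^0 * (t - (0:ℕ)*s) ^ (-a)) := by
    have := Finset.sum_range_succ' (fun k => (n.choose k : ℝ) * (-1)^k * (t - k*s) ^ (-a)) (n+1)
    have e2 : ∑ k ∈ Finset.range (n+2), (n.choose k : ℝ) * (-1)^k * (t - k*s) ^ (-a)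
        = ∑ k ∈ Finset.range (n+1), (n.choose k : ℝ) * (-1)^k * (t - k*s) ^ (-a) := by
      rw [Finset.sum_range_succ, Nat.choose_succ_self]; simp
    rw [e2] at this; linarith [this]
  rw [e1]
  simp
  ring

lemma Dsum_hasDerivAt (n : ℕ) (a s t : ℝ) (ht : ∀ k : ℕ, k ≤ n → t - k*s ≠ 0) :
    HasDerivAt (fun u => Dsum n a s u) (-a * Dsum n (a+1) s t) t := by
  unfold Dsum
  rw [Finset.mul_sum]
  apply HasDerivAt.fun_sum
  intro k hk
  have hne : t - (k:ℝ)*s ≠ 0 := ht k (Nat.lt_succ_iff.mp (Finset.mem_range.mp hk))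
  have h1 : HasDerivAt (fun u : ℝ => u - (k:ℝ)*s) 1 t := by
    simpa using (hasDerivAt_id t).sub_const ((k:ℝ)*s)
  have h2 := (Real.hasDerivAt_rpow_const (p := -a) (Or.inl hne)).comp t h1
  have h3 := h2.const_mul ((n.choose k : ℝ) * (-1)^k)
  refine h3.congr_deriv ?_
  rw [show -a - 1 = -(a+1) by ring]
  ring

lemma Dsum_bound : ∀ (n : ℕ) (a : ℝ), 0 < a → ∀ s : ℝ, 0 < s → ∀ t : ℝ, (n:ℝ)*s < t →
    |Dsum n a s t| ≤ (∏ i ∈ Finset.range n, (a + i)) * s^n * (t - n*s) ^ (-(a + n)) := by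
  intro n
  induction n with
  | zero =>
    intro a ha s hs t ht
    have ht0 : (0:ℝ) < t := by simpa using ht
    have : Dsum 0 a s t = t ^ (-a) := by simp [Dsum]
    rw [this]
    simp only [Finset.range_zero, Finset.prod_empty, pow_zero, one_mul, Nat.cast_zero,
      add_zero, zero_mul, sub_zero]
    rw [abs_of_nonneg (Real.rpow_nonneg ht0.le _)]
  | succ n ih =>
    intro a ha s hs t ht
    have hns : (n:ℝ)*s < t - s := by push_cast at ht ⊢; nlinarith
    set K : ℝ := a * ((∏ i ∈ Finset.range n, (a + 1 + i)) * s^n * ((t - s) - n*s) ^ (-((a+1) + n)))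
      with hK
    have hbound : ∀ u ∈ Set.Icc (t - s) t, ‖-a * Dsum n (a+1) s u‖ ≤ K := by
      intro u hu
      have hu1 : (n:ℝ)*s < u := lt_of_lt_of_le hns hu.1
      have h1 := ih (a+1) (by linarith) s hs u hu1
      have h2 : (u - n*s) ^ (-((a+1) + (n:ℝ))) ≤ ((t - s) - n*s) ^ (-((a+1) + (n:ℝ))) := by
        apply Real.rpow_le_rpow_of_nonpos (by linarith) (by linarith [hu.1])
          (by push_cast; nlinarith [Nat.cast_nonneg (α := ℝ) n])
      have h3 : |Dsum n (a+1) s u| ≤ (∏ i ∈ Finset.range n, (a + 1 + i)) * s^n *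
          ((t-s) - n*s) ^ (-((a+1) + n)) := by
        refine le_trans h1 ?_
        have hp : (0:ℝ) ≤ (∏ i ∈ Finset.range n, (a + 1 + i)) * s^n := by
          apply mul_nonneg (Finset.prod_nonneg fun i _ => by positivity) (by positivity)
        calc _ ≤ (∏ i ∈ Finset.range n, (a + 1 + i)) * s^n * ((t-s) - n*s) ^ (-((a+1) + (n:ℝ))) :=
              mul_le_mul_of_nonneg_left h2 hp
          _ = _ := rfl
      rw [norm_mul, norm_neg, Real.norm_eq_abs, Real.norm_eq_abs, abs_of_pos ha, hK]
      exact mul_le_mul_of_nonneg_left h3 (le_of_lt ha)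
    have hderiv : ∀ u ∈ Set.Icc (t - s) t, HasDerivWithinAt (fun u => Dsum n a s u)
        (-a * Dsum n (a+1) s u) (Set.Icc (t - s) t) u := by
      intro u hu
      refine (Dsum_hasDerivAt n a s u ?_).hasDerivWithinAt
      intro k hk
      have : (k:ℝ)*s ≤ (n:ℝ)*s := by
        apply mul_le_mul_of_nonneg_right (by exact_mod_cast hk) (le_of_lt hs)
      have := lt_of_lt_of_le (lt_of_le_of_lt this hns) hu.1
      linarith
    have hmvt := (convex_Icc (t - s) t).norm_image_sub_le_of_norm_hasDerivWithin_le
      hderiv hbound (⟨le_refl _, by linarith⟩ : t - s ∈ Set.Icc (t-s) t)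
      (⟨by linarith, le_refl _⟩ : t ∈ Set.Icc (t-s) t)
    rw [Dsum_succ]
    have : ‖t - (t - s)‖ = s := by rw [Real.norm_eq_abs]; rw [abs_of_pos (by linarith)]; ring
    rw [this] at hmvt
    rw [Real.norm_eq_abs] at hmvt
    calc |Dsum n a s t - Dsum n a s (t - s)| ≤ K * s := hmvt
      _ = (∏ i ∈ Finset.range (n+1), (a + i)) * s^(n+1) * (t - (n+1:ℕ)*s) ^ (-(a + (n+1:ℕ))) := by
          rw [hK, Finset.prod_range_succ' (fun i => a + (i:ℝ))]
          have e0 : (∏ i ∈ Finset.range n, (a + 1 + (i:ℝ)))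
              = ∏ i ∈ Finset.range n, (a + ((i+1:ℕ):ℝ)) :=
            Finset.prod_congr rfl fun i _ => by push_cast; ring
          rw [e0]
          have e1 : (t - s) - (n:ℝ)*s = t - ((n+1:ℕ):ℝ)*s := by push_cast; ring
          have e2 : -((a+1) + (n:ℝ)) = -(a + ((n+1:ℕ):ℝ)) := by push_cast; ring
          rw [e1, e2]
          push_cast
          ring
      _ = _ := by norm_num

lemma inv_sqrt_eq_rpow {x : ℝ} (hx : 0 < x) : (Real.sqrt x)⁻¹ = x ^ (-(1/2) : ℝ) := by
  rw [Real.sqrt_eq_rpow, ← Real.rpow_neg hx.le]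

lemma gker_eq_Dsum {m : ℕ} {s t : ℝ} (hs : 0 < s) (ht : (m:ℝ)*s < t) :
    gker m s t = Dsum m (1/2) s t := by
  unfold gker Dsum
  refine Finset.sum_congr rfl fun k hk => ?_
  have hk' : (k:ℝ) ≤ (m:ℝ) := by exact_mod_cast Nat.lt_succ_iff.mp (Finset.mem_range.mp hk)
  have hkt : (k:ℝ)*s < t := lt_of_le_of_lt (mul_le_mul_of_nonneg_right hk' hs.le) ht
  rw [if_pos hkt, inv_sqrt_eq_rpow (by linarith)]

/-- Tail bound for `gker`. -/
lemma gker_tail_bound {m : ℕ} {s t : ℝ} (hs : 0 < s) (ht : ((m:ℝ)+1)*s < t) :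
    |gker m s t| ≤ ((∏ i ∈ Finset.range m, ((1:ℝ)/2 + i)) * ((m:ℝ)+1) ^ ((m:ℝ) + 1/2))
      * s^m * t ^ (-((m:ℝ) + 1/2)) := by
  have hm1 : (0:ℝ) < (m:ℝ)+1 := by positivity
  have ht0 : 0 < t := lt_trans (by positivity) ht
  have hms : (m:ℝ)*s < t := by nlinarith
  have h1 := Dsum_bound m (1/2) (by norm_num) s hs t hms
  rw [gker_eq_Dsum hs hms]
  have hquot : t / ((m:ℝ)+1) ≤ t - (m:ℝ)*s := by
    rw [div_le_iff₀ hm1]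
    nlinarith [Nat.cast_nonneg (α := ℝ) m]
  have hq0 : 0 < t / ((m:ℝ)+1) := by positivity
  have h2 : (t - (m:ℝ)*s) ^ (-(1/2 + (m:ℝ))) ≤ (t / ((m:ℝ)+1)) ^ (-(1/2 + (m:ℝ))) :=
    Real.rpow_le_rpow_of_nonpos hq0 hquot (by
      have : (0:ℝ) ≤ 1/2 + (m:ℝ) := by positivity
      linarith)
  have h3 : (t / ((m:ℝ)+1)) ^ (-(1/2 + (m:ℝ)))
      = ((m:ℝ)+1) ^ ((m:ℝ) + 1/2) * t ^ (-((m:ℝ) + 1/2)) := by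
    rw [Real.div_rpow ht0.le hm1.le,
      show (-(1/2 + (m:ℝ))) = -((m:ℝ)+1/2) by ring,
      Real.rpow_neg hm1.le]
    field_simp
  have hp : (0:ℝ) ≤ (∏ i ∈ Finset.range m, ((1:ℝ)/2 + i)) * s^m :=
    mul_nonneg (Finset.prod_nonneg fun i _ => by positivity) (by positivity)
  calc |Dsum m (1/2) s t|
      ≤ (∏ i ∈ Finset.range m, ((1:ℝ)/2 + i)) * s^m * (t - m*s) ^ (-(1/2 + (m:ℝ))) := h1
    _ ≤ (∏ i ∈ Finset.range m, ((1:ℝ)/2 + i)) * s^m * ((t / ((m:ℝ)+1)) ^ (-(1/2 + (m:ℝ)))) :=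
        mul_le_mul_of_nonneg_left h2 hp
    _ = _ := by rw [h3]; ring

/-- Crude bound for `gker`. -/
lemma gker_crude_bound (m : ℕ) (s t : ℝ) :
    |gker m s t| ≤ ∑ k ∈ Finset.range (m+1), (m.choose k : ℝ) *
      (if (k : ℝ) * s < t then (Real.sqrt (t - (k : ℝ) * s))⁻¹ else 0) := by
  refine le_trans (Finset.abs_sum_le_sum_abs _ _) (Finset.sum_le_sum fun k _ => ?_)
  rw [abs_mul, abs_mul, abs_pow, abs_neg, abs_one, one_pow, mul_one, Nat.abs_cast]
  gcongr
  split
  · rw [abs_of_nonneg (by positivity)]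
  · simp

lemma exp_neg_le_rpow {x M : ℝ} (hx : 0 < x) (hM : 0 ≤ M) (N : ℕ) (hMN : M ≤ N) :
    Real.exp (-x) ≤ (N.factorial : ℝ) * x ^ (-M) := by
  have hex : (0:ℝ) < Real.exp x := Real.exp_pos x
  have hxM : (0:ℝ) < x ^ M := Real.rpow_pos_of_pos hx M
  have hNf : (1:ℝ) ≤ (N.factorial : ℝ) := by
    exact_mod_cast Nat.one_le_iff_ne_zero.mpr N.factorial_ne_zero
  have key : x ^ M ≤ (N.factorial : ℝ) * Real.exp x := by
    rcases le_total x 1 with h | h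
    · have h1 : x ^ M ≤ 1 := Real.rpow_le_one hx.le h hM
      nlinarith [Real.one_le_exp hx.le]
    · have h1 : x ^ M ≤ x ^ (N:ℝ) := Real.rpow_le_rpow_of_exponent_le h hMN
      rw [Real.rpow_natCast] at h1
      have h2 := Real.pow_div_factorial_le_exp (x := x) hx.le N
      have h3 : (0:ℝ) < (N.factorial : ℝ) := by positivity
      calc x ^ M ≤ x ^ N := h1
        _ ≤ (N.factorial : ℝ) * Real.exp x := by
            rw [div_le_iff₀ h3] at h2; linarith
  rw [Real.exp_neg, Real.rpow_neg hx.le, inv_le_iff_one_le_mul₀ hex]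
  have h4 : (1:ℝ) ≤ ((N.factorial : ℝ) * Real.exp x) / x ^ M := (one_le_div hxM).mpr key
  have h5 : ((N.factorial : ℝ) * Real.exp x) / x ^ M
      = (N.factorial : ℝ) * (x ^ M)⁻¹ * Real.exp x := by ring
  linarith [h4, h5 ▸ h4]

lemma lint_Ioc_rpow {a b c : ℝ} (ha : 0 ≤ a) (hab : a ≤ b) (hc : -1 < c) :
    ∫⁻ t in Set.Ioc a b, ENNReal.ofReal (t ^ c)
      = ENNReal.ofReal ((b ^ (c+1) - a ^ (c+1)) / (c+1)) := by
  have hint : IntervalIntegrable (fun t : ℝ => t ^ c) volume a b :=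
    intervalIntegral.intervalIntegrable_rpow' hc
  have hii := (intervalIntegrable_iff_integrableOn_Ioc_of_le hab).mp hint
  rw [← ofReal_integral_eq_lintegral_ofReal hii
    ((ae_restrict_mem measurableSet_Ioc).mono fun t ht =>
      Real.rpow_nonneg (le_trans ha ht.1.le) c)]
  rw [← intervalIntegral.integral_of_le hab, integral_rpow (Or.inl hc)]

lemma lint_Ioi_rpow {b c : ℝ} (hb : 0 < b) (hc : c < -1) :
    ∫⁻ t in Set.Ioi b, ENNReal.ofReal (t ^ c)
      = ENNReal.ofReal (-b ^ (c+1) / (c+1)) := by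
  have hii := integrableOn_Ioi_rpow_of_lt hc hb
  rw [← ofReal_integral_eq_lintegral_ofReal hii
    ((ae_restrict_mem measurableSet_Ioi).mono fun t ht =>
      Real.rpow_nonneg (le_trans hb.le (le_of_lt ht)) c)]
  rw [integral_Ioi_rpow_of_lt hc hb]

lemma lint_sqrt_inv_Ioc {A : ℝ} (hA : 0 ≤ A) :
    ∫⁻ t in Set.Ioc (0:ℝ) A, ENNReal.ofReal ((Real.sqrt t)⁻¹)
      = ENNReal.ofReal (2 * Real.sqrt A) := by
  rw [setLIntegral_congr_fun measurableSet_Ioc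
    ((fun t (ht : t ∈ Set.Ioc (0:ℝ) A) => by
      rw [inv_sqrt_eq_rpow ht.1]))]
  rw [lint_Ioc_rpow le_rfl hA (by norm_num)]
  norm_num
  rw [Real.sqrt_eq_rpow]
  congr 1
  ring
  rw [ENNReal.ofReal_mul (by positivity)]
  simp

lemma lint_hk {A c : ℝ} (hA : 0 ≤ A) (hc : 0 ≤ c) :
    ∫⁻ t in Set.Ioc (0:ℝ) A,
        ENNReal.ofReal (if c < t then (Real.sqrt (t - c))⁻¹ else 0)
      ≤ ENNReal.ofReal (2 * Real.sqrt A) := by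
  have step1 : ∫⁻ t in Set.Ioc (0:ℝ) A,
      ENNReal.ofReal (if c < t then (Real.sqrt (t - c))⁻¹ else 0)
      ≤ ∫⁻ t in Set.Ioc (0:ℝ) A,
        (Set.Ioc c (c+A)).indicator (fun t => ENNReal.ofReal ((Real.sqrt (t - c))⁻¹)) t := by
    apply setLIntegral_mono' measurableSet_Ioc
    intro t ht
    split
    · next h =>
      rw [Set.indicator_of_mem (Set.mem_Ioc.mpr ⟨h, by linarith [ht.2]⟩)]
    · simp
  have step2 : ∫⁻ t in Set.Ioc (0:ℝ) A,
        (Set.Ioc c (c+A)).indicator (fun t => ENNReal.ofReal ((Real.sqrt (t - c))⁻¹)) t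
      ≤ ∫⁻ t in Set.Ioc c (c+A), ENNReal.ofReal ((Real.sqrt (t - c))⁻¹) :=
    le_trans (setLIntegral_le_lintegral _ _) (le_of_eq (lintegral_indicator measurableSet_Ioc _))
  have step3 : ∫⁻ t in Set.Ioc c (c+A), ENNReal.ofReal ((Real.sqrt (t - c))⁻¹)
      = ∫⁻ t in Set.Ioc (0:ℝ) A, ENNReal.ofReal ((Real.sqrt t)⁻¹) := by
    have hmp := measurePreserving_add_right (volume : Measure ℝ) c
    have hemb : MeasurableEmbedding (fun x : ℝ => x + c) :=
      (MeasurableEquiv.addRight c).measurableEmbedding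
    have := hmp.setLIntegral_comp_preimage_emb hemb
      (fun t => ENNReal.ofReal ((Real.sqrt (t - c))⁻¹)) (Set.Ioc c (c+A))
    rw [← this]
    have hpre : (fun x : ℝ => x + c) ⁻¹' Set.Ioc c (c+A) = Set.Ioc 0 A := by
      ext x; simp only [Set.mem_preimage, Set.mem_Ioc]
      constructor <;> intro h <;> constructor <;> linarith [h.1, h.2]
    rw [hpre]
    congr 1
    ext x
    simp
  rw [step3, lint_sqrt_inv_Ioc hA] at step2
  exact le_trans step1 step2

lemma region1_est (m : ℕ) (s c A : ℝ) (hs : 0 ≤ s) (hc : 0 ≤ c) (hA : 0 ≤ A) :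
    ∫⁻ t in Set.Ioc (0:ℝ) A, ENNReal.ofReal
        (c * ∑ k ∈ Finset.range (m+1), (m.choose k : ℝ) *
          (if (k : ℝ) * s < t then (Real.sqrt (t - (k : ℝ) * s))⁻¹ else 0))
      ≤ ENNReal.ofReal (c * 2^m * (2 * Real.sqrt A)) := by
  have hmeas : ∀ k : ℕ, Measurable (fun t : ℝ =>
      ENNReal.ofReal ((if (k : ℝ) * s < t then (Real.sqrt (t - (k : ℝ) * s))⁻¹ else 0))) := by
    intro k
    apply ENNReal.measurable_ofReal.comp
    apply Measurable.ite
    · exact measurableSet_lt measurable_const measurable_id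
    · exact ((Real.continuous_sqrt.comp (continuous_id.sub continuous_const)).measurable).inv
    · exact measurable_const
  have hterm_nonneg : ∀ (t : ℝ) (k : ℕ), (0:ℝ) ≤ (m.choose k : ℝ) *
      (if (k : ℝ) * s < t then (Real.sqrt (t - (k : ℝ) * s))⁻¹ else 0) := by
    intro t k; apply mul_nonneg (by positivity); split <;> positivity
  calc ∫⁻ t in Set.Ioc (0:ℝ) A, ENNReal.ofReal (c * ∑ k ∈ Finset.range (m+1), (m.choose k : ℝ) *
          (if (k : ℝ) * s < t then (Real.sqrt (t - (k : ℝ) * s))⁻¹ else 0))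
      = ∫⁻ t in Set.Ioc (0:ℝ) A, ENNReal.ofReal c * ∑ k ∈ Finset.range (m+1),
          ENNReal.ofReal (m.choose k : ℝ) *
          ENNReal.ofReal (if (k : ℝ) * s < t then (Real.sqrt (t - (k : ℝ) * s))⁻¹ else 0) := by
        refine lintegral_congr fun t => ?_
        rw [ENNReal.ofReal_mul hc, ENNReal.ofReal_sum_of_nonneg (fun k _ => hterm_nonneg t k)]
        congr 1
        refine Finset.sum_congr rfl fun k _ => ?_
        rw [ENNReal.ofReal_mul (by positivity)]
    _ = ENNReal.ofReal c * ∑ k ∈ Finset.range (m+1), ENNReal.ofReal (m.choose k : ℝ) *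
          (∫⁻ t in Set.Ioc (0:ℝ) A,
            ENNReal.ofReal (if (k : ℝ) * s < t then (Real.sqrt (t - (k : ℝ) * s))⁻¹ else 0)) := by
        rw [lintegral_const_mul' _ _ ENNReal.ofReal_ne_top]
        congr 1
        rw [lintegral_finset_sum _ (fun k _ => (hmeas k).const_mul _)]
        refine Finset.sum_congr rfl fun k _ => ?_
        rw [lintegral_const_mul' _ _ ENNReal.ofReal_ne_top]
    _ ≤ ENNReal.ofReal c * ∑ k ∈ Finset.range (m+1), ENNReal.ofReal (m.choose k : ℝ) *
          ENNReal.ofReal (2 * Real.sqrt A) := by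
        gcongr with k hk
        exact lint_hk hA (by positivity)
    _ = ENNReal.ofReal (c * 2^m * (2 * Real.sqrt A)) := by
        rw [← Finset.sum_mul, ← ENNReal.ofReal_sum_of_nonneg (fun k _ => by positivity)]
        have : ∑ k ∈ Finset.range (m+1), (m.choose k : ℝ) = (2:ℝ)^m := by
          rw [← Nat.cast_sum]
          rw [Nat.sum_range_choose]
          push_cast; ring
        rw [this, ← ENNReal.ofReal_mul (by positivity), ← ENNReal.ofReal_mul (by positivity)]
        ring_nf

lemma lint_const_rpow_Ioc {c a b p : ℝ} (hc : 0 ≤ c) (ha : 0 ≤ a) (hab : a ≤ b) (hp : -1 < p) :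
    ∫⁻ t in Set.Ioc a b, ENNReal.ofReal (c * t ^ p)
      = ENNReal.ofReal c * ENNReal.ofReal ((b ^ (p+1) - a ^ (p+1)) / (p+1)) := by
  calc ∫⁻ t in Set.Ioc a b, ENNReal.ofReal (c * t ^ p)
      = ∫⁻ t in Set.Ioc a b, ENNReal.ofReal c * ENNReal.ofReal (t ^ p) :=
        lintegral_congr fun t => ENNReal.ofReal_mul hc
    _ = ENNReal.ofReal c * ∫⁻ t in Set.Ioc a b, ENNReal.ofReal (t ^ p) :=
        lintegral_const_mul' _ _ ENNReal.ofReal_ne_top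
    _ = _ := by rw [lint_Ioc_rpow ha hab hp]

lemma lint_const_rpow_Ioi {c b p : ℝ} (hc : 0 ≤ c) (hb : 0 < b) (hp : p < -1) :
    ∫⁻ t in Set.Ioi b, ENNReal.ofReal (c * t ^ p)
      = ENNReal.ofReal c * ENNReal.ofReal (-b ^ (p+1) / (p+1)) := by
  calc ∫⁻ t in Set.Ioi b, ENNReal.ofReal (c * t ^ p)
      = ∫⁻ t in Set.Ioi b, ENNReal.ofReal c * ENNReal.ofReal (t ^ p) :=
        lintegral_congr fun t => ENNReal.ofReal_mul hc
    _ = ENNReal.ofReal c * ∫⁻ t in Set.Ioi b, ENNReal.ofReal (t ^ p) :=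
        lintegral_const_mul' _ _ ENNReal.ofReal_ne_top
    _ = _ := by rw [lint_Ioi_rpow hb hp]

theorem gker_integral_decay (m : ℕ) (hm : 1 ≤ m) (γ α : ℝ) (hγ : 0 ≤ γ) (hα : 0 < α) :
    ∃ C : ℝ, 0 < C ∧
      ∀ r : ℝ, 0 < r → ∀ j : ℕ, 1 ≤ j →
        (∫⁻ t in Set.Ioi (0 : ℝ), ENNReal.ofReal
            (|gker m (r ^ 2) t| * Real.exp (-(α * 4 ^ j * r ^ 2) / t) *
              t ^ (-γ / 2) * (Real.sqrt t)⁻¹)) ≤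
          ENNReal.ofReal (C * r ^ (-γ) * (2 : ℝ) ^ (-(j : ℝ) * (2 * (m : ℝ) + γ))) := by
  have hm1 : (1:ℝ) ≤ (m:ℝ) := by exact_mod_cast hm
  have hmγ : (0:ℝ) < (m:ℝ) + γ/2 := by linarith
  set M : ℝ := (m:ℝ) + (γ+1)/2 with hM_def
  obtain ⟨N, hMN⟩ : ∃ N : ℕ, M ≤ (N:ℝ) :=
    ⟨m + 1 + Nat.ceil γ, by rw [hM_def]; push_cast; have := Nat.le_ceil γ; linarith⟩
  set Kc : ℝ := (∏ i ∈ Finset.range m, ((1:ℝ)/2 + i)) * ((m:ℝ)+1) ^ ((m:ℝ) + 1/2) with hKc_def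
  have hKc : 0 < Kc := by
    rw [hKc_def]
    exact mul_pos (Finset.prod_pos fun i _ => by positivity)
      (Real.rpow_pos_of_pos (by positivity) _)
  have hαM : 0 < α ^ (-M) := Real.rpow_pos_of_pos hα _
  have hNf : (0:ℝ) < (N.factorial : ℝ) := by positivity
  set c1 : ℝ := (N.factorial : ℝ) * α^(-M) * 2^(m+1) * ((m:ℝ)+1)^((m:ℝ)+1/2) with hc1_def
  set c2 : ℝ := 2 * Kc * (N.factorial : ℝ) * α^(-M) with hc2_def
  set c3 : ℝ := Kc / ((m:ℝ) + γ/2) with hc3_def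
  have hc1 : 0 < c1 := by
    rw [hc1_def]
    have : (0:ℝ) < ((m:ℝ)+1)^((m:ℝ)+1/2) := Real.rpow_pos_of_pos (by positivity) _
    positivity
  have hc2 : 0 < c2 := by rw [hc2_def]; positivity
  have hc3 : 0 < c3 := by rw [hc3_def]; positivity
  have hM0 : (0:ℝ) ≤ M := by rw [hM_def]; positivity
  refine ⟨c1 + c2 + c3, by positivity, ?_⟩
  intro r hr j hj
  set P : ℝ := α * 4 ^ j * r ^ 2 with hP_def
  set A : ℝ := ((m:ℝ)+1) * r ^ 2 with hA_def
  set B : ℝ := (4:ℝ) ^ j * r ^ 2 with hB_def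
  set B₂ : ℝ := max A B with hB2_def
  have hr2 : (0:ℝ) < r ^ 2 := by positivity
  have hP : 0 < P := by rw [hP_def]; positivity
  have hA : 0 < A := by rw [hA_def]; positivity
  have hB : 0 < B := by rw [hB_def]; positivity
  have hAB2 : A ≤ B₂ := le_max_left _ _
  have hBB2 : B ≤ B₂ := le_max_right _ _
  have hB2 : 0 < B₂ := lt_of_lt_of_le hB hBB2
  -- exponential bound
  have hexp : ∀ t : ℝ, 0 < t →
      Real.exp (-P / t) ≤ (N.factorial : ℝ) * (P^(-M) * t^M) := by
    intro t ht0
    have hx : 0 < P / t := by positivity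
    have h1 : Real.exp (-(P/t)) ≤ (N.factorial : ℝ) * (P/t)^(-M) :=
      exp_neg_le_rpow hx hM0 N hMN
    have h2 : (P/t)^(-M) = P^(-M) * t^M := by
      rw [Real.div_rpow hP.le ht0.le, Real.rpow_neg ht0.le M, div_eq_mul_inv, inv_inv]
    rw [neg_div]
    rw [h2] at h1
    linarith
  -- region I pointwise
  have crude_nonneg : ∀ t : ℝ, (0:ℝ) ≤ ∑ k ∈ Finset.range (m+1), (m.choose k : ℝ) *
      (if (k : ℝ) * (r^2) < t then (Real.sqrt (t - (k : ℝ) * (r^2)))⁻¹ else 0) := by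
    intro t
    refine Finset.sum_nonneg fun k _ => mul_nonneg (by positivity) ?_
    split <;> positivity
  have hpt1 : ∀ t ∈ Set.Ioc (0:ℝ) A,
      |gker m (r ^ 2) t| * Real.exp (-P / t) * t ^ (-γ / 2) * (Real.sqrt t)⁻¹
      ≤ ((N.factorial : ℝ) * P^(-M) * A^m) * ∑ k ∈ Finset.range (m+1), (m.choose k : ℝ) *
          (if (k : ℝ) * (r^2) < t then (Real.sqrt (t - (k : ℝ) * (r^2)))⁻¹ else 0) := by
    intro t ht
    obtain ⟨ht0, htA⟩ := ht
    have hE : Real.exp (-P / t) * t ^ (-γ / 2) * (Real.sqrt t)⁻¹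
        ≤ (N.factorial : ℝ) * P^(-M) * A^m := by
      have h3 : t^M * (t ^ (-γ/2) * t^(-(1/2):ℝ)) = t^m := by
        rw [← Real.rpow_add ht0, ← Real.rpow_add ht0, ← Real.rpow_natCast t m]
        congr 1
        rw [hM_def]; push_cast; ring
      calc Real.exp (-P / t) * t ^ (-γ / 2) * (Real.sqrt t)⁻¹
          ≤ ((N.factorial : ℝ) * (P^(-M) * t^M)) * t ^ (-γ / 2) * (Real.sqrt t)⁻¹ := by
            apply mul_le_mul_of_nonneg_right
              (mul_le_mul_of_nonneg_right (hexp t ht0) (Real.rpow_nonneg ht0.le _))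
              (inv_nonneg.mpr (Real.sqrt_nonneg t))
        _ = ((N.factorial : ℝ) * P^(-M)) * (t^M * (t ^ (-γ/2) * t^(-(1/2):ℝ))) := by
            rw [inv_sqrt_eq_rpow ht0]; ring
        _ = ((N.factorial : ℝ) * P^(-M)) * t^m := by rw [h3]
        _ ≤ ((N.factorial : ℝ) * P^(-M)) * A^m := by
            apply mul_le_mul_of_nonneg_left (pow_le_pow_left₀ ht0.le htA m)
            exact mul_nonneg hNf.le (Real.rpow_nonneg hP.le _)
        _ = (N.factorial : ℝ) * P^(-M) * A^m := by ring
    calc |gker m (r ^ 2) t| * Real.exp (-P / t) * t ^ (-γ / 2) * (Real.sqrt t)⁻¹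
        = |gker m (r ^ 2) t| * (Real.exp (-P / t) * t ^ (-γ / 2) * (Real.sqrt t)⁻¹) := by ring
      _ ≤ (∑ k ∈ Finset.range (m+1), (m.choose k : ℝ) *
          (if (k : ℝ) * (r^2) < t then (Real.sqrt (t - (k : ℝ) * (r^2)))⁻¹ else 0))
          * ((N.factorial : ℝ) * P^(-M) * A^m) :=
          mul_le_mul (gker_crude_bound m (r^2) t) hE
            (mul_nonneg (mul_nonneg (Real.exp_nonneg _) (Real.rpow_nonneg ht0.le _))
              (inv_nonneg.mpr (Real.sqrt_nonneg t)))
            (crude_nonneg t)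
      _ = _ := by ring
  have hreg1 : (∫⁻ t in Set.Ioc (0:ℝ) A, ENNReal.ofReal
        (|gker m (r ^ 2) t| * Real.exp (-P / t) * t ^ (-γ / 2) * (Real.sqrt t)⁻¹))
      ≤ ENNReal.ofReal (((N.factorial : ℝ) * P^(-M) * A^m) * 2^m * (2 * Real.sqrt A)) := by
    refine le_trans (setLIntegral_mono' measurableSet_Ioc fun t ht =>
      ENNReal.ofReal_le_ofReal (hpt1 t ht)) ?_
    exact region1_est m (r^2) _ A hr2.le
      (mul_nonneg (mul_nonneg hNf.le (Real.rpow_nonneg hP.le _)) (pow_nonneg hA.le m)) hA.le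
  -- region II
  have hcc2 : (0:ℝ) ≤ Kc * (N.factorial : ℝ) * (r^2)^m * P^(-M) :=
    mul_nonneg (mul_nonneg (mul_nonneg hKc.le hNf.le) (pow_nonneg hr2.le m))
      (Real.rpow_nonneg hP.le _)
  have hpt2 : ∀ t ∈ Set.Ioc A B₂,
      |gker m (r ^ 2) t| * Real.exp (-P / t) * t ^ (-γ / 2) * (Real.sqrt t)⁻¹
      ≤ (Kc * (N.factorial : ℝ) * (r^2)^m * P^(-M)) * t ^ (-(1/2) : ℝ) := by
    intro t ht
    have ht0 : 0 < t := lt_trans hA ht.1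
    have htail := gker_tail_bound (m := m) hr2 (show ((m:ℝ)+1)*(r^2) < t from hA_def ▸ ht.1)
    rw [← hKc_def] at htail
    have hpow : t^(-((m:ℝ)+1/2)) * t^M * (t ^ (-γ / 2) * t^(-(1/2):ℝ)) = t ^ (-(1/2):ℝ) := by
      rw [← Real.rpow_add ht0, ← Real.rpow_add ht0, ← Real.rpow_add ht0]
      congr 1
      rw [hM_def]; ring
    calc |gker m (r ^ 2) t| * Real.exp (-P / t) * t ^ (-γ / 2) * (Real.sqrt t)⁻¹
        = (|gker m (r ^ 2) t| * Real.exp (-P / t)) * (t ^ (-γ / 2) * t^(-(1/2):ℝ)) := by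
          rw [inv_sqrt_eq_rpow ht0]; ring
      _ ≤ ((Kc * (r^2)^m * t^(-((m:ℝ)+1/2))) * ((N.factorial : ℝ) * (P^(-M) * t^M))) *
            (t ^ (-γ / 2) * t^(-(1/2):ℝ)) := by
          apply mul_le_mul_of_nonneg_right
            (mul_le_mul htail (hexp t ht0) (Real.exp_nonneg _)
              (mul_nonneg (mul_nonneg hKc.le (pow_nonneg hr2.le m))
                (Real.rpow_nonneg ht0.le _)))
            (mul_nonneg (Real.rpow_nonneg ht0.le _) (Real.rpow_nonneg ht0.le _))
      _ = (Kc * (N.factorial : ℝ) * (r^2)^m * P^(-M)) *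
            (t^(-((m:ℝ)+1/2)) * t^M * (t ^ (-γ / 2) * t^(-(1/2):ℝ))) := by ring
      _ = (Kc * (N.factorial : ℝ) * (r^2)^m * P^(-M)) * t ^ (-(1/2) : ℝ) := by rw [hpow]
  have hval2 : ((B₂ ^ ((-(1/2):ℝ)+1) - A ^ ((-(1/2):ℝ)+1)) / ((-(1/2):ℝ)+1))
      ≤ 2 * Real.sqrt B := by
    have hs2 : Real.sqrt B₂ ≤ Real.sqrt A + Real.sqrt B := by
      have h1 : B₂ ≤ (Real.sqrt A + Real.sqrt B)^2 := by
        have e1 := Real.sq_sqrt hA.le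
        have e2 := Real.sq_sqrt hB.le
        have e3 := Real.sqrt_nonneg A
        have e4 := Real.sqrt_nonneg B
        have e6 : 0 ≤ Real.sqrt A * Real.sqrt B := mul_nonneg e3 e4
        rw [hB2_def]
        have hA' : A ≤ (Real.sqrt A + Real.sqrt B)^2 := by nlinarith
        have hB' : B ≤ (Real.sqrt A + Real.sqrt B)^2 := by nlinarith
        exact max_le hA' hB'
      calc Real.sqrt B₂ ≤ Real.sqrt ((Real.sqrt A + Real.sqrt B)^2) := Real.sqrt_le_sqrt h1
        _ = Real.sqrt A + Real.sqrt B := Real.sqrt_sq (by positivity)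
    have e5 : ((-(1/2):ℝ)+1) = (1/2:ℝ) := by norm_num
    rw [e5, ← Real.sqrt_eq_rpow, ← Real.sqrt_eq_rpow]
    rw [div_le_iff₀ (by norm_num : (0:ℝ) < 1/2)]
    nlinarith [Real.sqrt_nonneg A]
  have hreg2 : (∫⁻ t in Set.Ioc A B₂, ENNReal.ofReal
        (|gker m (r ^ 2) t| * Real.exp (-P / t) * t ^ (-γ / 2) * (Real.sqrt t)⁻¹))
      ≤ ENNReal.ofReal ((Kc * (N.factorial : ℝ) * (r^2)^m * P^(-M)) * (2 * Real.sqrt B)) := by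
    refine le_trans (setLIntegral_mono' measurableSet_Ioc fun t ht =>
      ENNReal.ofReal_le_ofReal (hpt2 t ht)) ?_
    rw [lint_const_rpow_Ioc hcc2 hA.le hAB2 (by norm_num)]
    rw [← ENNReal.ofReal_mul hcc2]
    exact ENNReal.ofReal_le_ofReal (mul_le_mul_of_nonneg_left hval2 hcc2)
  -- region III
  have hcc3 : (0:ℝ) ≤ Kc * (r^2)^m := mul_nonneg hKc.le (pow_nonneg hr2.le m)
  have hp3 : (-((m:ℝ)+1+γ/2)) < -1 := by linarith
  have hpt3 : ∀ t ∈ Set.Ioi B₂,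
      |gker m (r ^ 2) t| * Real.exp (-P / t) * t ^ (-γ / 2) * (Real.sqrt t)⁻¹
      ≤ (Kc * (r^2)^m) * t ^ (-((m:ℝ)+1+γ/2)) := by
    intro t ht
    have htB2 : B₂ < t := ht
    have ht0 : 0 < t := lt_trans hB2 htB2
    have htA : ((m:ℝ)+1) * (r^2) < t := hA_def ▸ lt_of_le_of_lt hAB2 htB2
    have htail := gker_tail_bound (m := m) hr2 htA
    rw [← hKc_def] at htail
    have hE1 : Real.exp (-P/t) ≤ 1 :=
      Real.exp_le_one_iff.mpr (div_nonpos_of_nonpos_of_nonneg (neg_nonpos.mpr hP.le) ht0.le)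
    have hpow3 : t^(-((m:ℝ)+1/2)) * (t^(-γ/2) * t^(-(1/2):ℝ)) = t^(-((m:ℝ)+1+γ/2)) := by
      rw [← Real.rpow_add ht0, ← Real.rpow_add ht0]
      congr 1
      ring
    have hnn : (0:ℝ) ≤ t ^ (-γ/2) * t^(-(1/2):ℝ) :=
      mul_nonneg (Real.rpow_nonneg ht0.le _) (Real.rpow_nonneg ht0.le _)
    calc |gker m (r ^ 2) t| * Real.exp (-P / t) * t ^ (-γ / 2) * (Real.sqrt t)⁻¹
        = (|gker m (r ^ 2) t| * (t ^ (-γ / 2) * t^(-(1/2):ℝ))) * Real.exp (-P / t) := by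
          rw [inv_sqrt_eq_rpow ht0]; ring
      _ ≤ (|gker m (r ^ 2) t| * (t ^ (-γ / 2) * t^(-(1/2):ℝ))) * 1 := by
          apply mul_le_mul_of_nonneg_left hE1 (mul_nonneg (abs_nonneg _) hnn)
      _ = |gker m (r ^ 2) t| * (t ^ (-γ / 2) * t^(-(1/2):ℝ)) := mul_one _
      _ ≤ (Kc * (r^2)^m * t^(-((m:ℝ)+1/2))) * (t ^ (-γ / 2) * t^(-(1/2):ℝ)) :=
          mul_le_mul_of_nonneg_right htail hnn
      _ = (Kc * (r^2)^m) * (t^(-((m:ℝ)+1/2)) * (t ^ (-γ / 2) * t^(-(1/2):ℝ))) := by ring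
      _ = (Kc * (r^2)^m) * t^(-((m:ℝ)+1+γ/2)) := by rw [hpow3]
  have hreg3 : (∫⁻ t in Set.Ioi B₂, ENNReal.ofReal
        (|gker m (r ^ 2) t| * Real.exp (-P / t) * t ^ (-γ / 2) * (Real.sqrt t)⁻¹))
      ≤ ENNReal.ofReal ((Kc * (r^2)^m) * (B ^ (-((m:ℝ)+γ/2)) / ((m:ℝ)+γ/2))) := by
    refine le_trans (setLIntegral_mono' measurableSet_Ioi fun t ht =>
      ENNReal.ofReal_le_ofReal (hpt3 t ht)) ?_
    rw [lint_const_rpow_Ioi hcc3 hB2 hp3]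
    rw [← ENNReal.ofReal_mul hcc3]
    apply ENNReal.ofReal_le_ofReal
    apply mul_le_mul_of_nonneg_left _ hcc3
    have e6 : (-((m:ℝ)+1+γ/2) + 1) = -((m:ℝ)+γ/2) := by ring
    rw [e6]
    have h7 : B₂ ^ (-((m:ℝ)+γ/2)) ≤ B ^ (-((m:ℝ)+γ/2)) :=
      Real.rpow_le_rpow_of_nonpos hB hBB2 (by linarith)
    calc -B₂ ^ (-((m:ℝ)+γ/2)) / -((m:ℝ)+γ/2) = B₂ ^ (-((m:ℝ)+γ/2)) / ((m:ℝ)+γ/2) := by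
          rw [neg_div_neg_eq]
      _ ≤ B ^ (-((m:ℝ)+γ/2)) / ((m:ℝ)+γ/2) := by gcongr
  -- power identities
  have two_pos' : (0:ℝ) < 2 := by norm_num
  have h4eq : (4:ℝ)^j = (2:ℝ)^(2*j) := by
    rw [show (4:ℝ) = 2^2 by norm_num, ← pow_mul]
  have e2pow : ∀ y : ℝ, ((4:ℝ)^j) ^ y = (2:ℝ) ^ (2*(j:ℝ)*y) := by
    intro y
    rw [h4eq, ← Real.rpow_natCast 2 (2*j), ← Real.rpow_mul (by norm_num : (0:ℝ) ≤ 2)]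
    congr 1
    push_cast; ring
  have hr2y : ∀ y : ℝ, ((r^2) : ℝ) ^ y = r ^ (2*y) := by
    intro y
    rw [← Real.rpow_natCast r 2, ← Real.rpow_mul hr.le]
    norm_num
  have er : ((r^2):ℝ)^(-M) * r^(2*m) * r = r ^ (-γ) := by
    calc ((r^2):ℝ)^(-M) * r^(2*m) * r
        = r^(2*(-M)) * r^((2*m:ℕ):ℝ) * r^(1:ℝ) := by
          rw [hr2y, Real.rpow_natCast, Real.rpow_one]
      _ = r ^ (-γ) := by
          rw [← Real.rpow_add hr, ← Real.rpow_add hr]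
          congr 1
          rw [hM_def]; push_cast; ring
  have er3 : r^(2*m) * ((r^2):ℝ)^(-((m:ℝ)+γ/2)) = r ^ (-γ) := by
    calc r^(2*m) * ((r^2):ℝ)^(-((m:ℝ)+γ/2))
        = r^((2*m:ℕ):ℝ) * r^(2*(-((m:ℝ)+γ/2))) := by
          rw [hr2y, Real.rpow_natCast]
      _ = r ^ (-γ) := by
          rw [← Real.rpow_add hr]
          congr 1
          push_cast; ring
  have er2m : ((r^2):ℝ)^m = r^(2*m) := (pow_mul r 2 m).symm
  have eAm : A^m = ((m:ℝ)+1)^m * r^(2*m) := by rw [hA_def, mul_pow, ← pow_mul]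
  have esA : Real.sqrt A = Real.sqrt ((m:ℝ)+1) * r := by
    rw [hA_def, Real.sqrt_mul (by positivity), Real.sqrt_sq hr.le]
  have esB : Real.sqrt B = 2^j * r := by
    rw [hB_def, Real.sqrt_mul (by positivity), Real.sqrt_sq hr.le]
    congr 1
    rw [h4eq, mul_comm 2 j, pow_mul]
    exact Real.sqrt_sq (by positivity)
  have e3 : P^(-M) = α^(-M) * (((4:ℝ)^j)^(-M) * ((r^2):ℝ)^(-M)) := by
    rw [hP_def, Real.mul_rpow (by positivity) hr2.le, Real.mul_rpow hα.le (by positivity)]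
    ring
  have eZW : ((4:ℝ)^j)^(-M) = (2:ℝ)^(-(j:ℝ)*(2*(m:ℝ)+γ)) * (2:ℝ)^(-(j:ℝ)) := by
    rw [e2pow, ← Real.rpow_add two_pos']
    congr 1
    rw [hM_def]; push_cast; ring
  have eZ2 : ((4:ℝ)^j)^(-M) * (2:ℝ)^j = (2:ℝ)^(-(j:ℝ)*(2*(m:ℝ)+γ)) := by
    rw [e2pow, ← Real.rpow_natCast 2 j, ← Real.rpow_add two_pos']
    congr 1
    rw [hM_def]; push_cast; ring
  have eZ3 : ((4:ℝ)^j)^(-((m:ℝ)+γ/2)) = (2:ℝ)^(-(j:ℝ)*(2*(m:ℝ)+γ)) := by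
    rw [e2pow]; congr 1; ring
  have eB3 : B^(-((m:ℝ)+γ/2)) = ((4:ℝ)^j)^(-((m:ℝ)+γ/2)) * ((r^2):ℝ)^(-((m:ℝ)+γ/2)) := by
    rw [hB_def, Real.mul_rpow (by positivity) hr2.le]
  have em1 : ((m:ℝ)+1)^m * Real.sqrt ((m:ℝ)+1) = ((m:ℝ)+1)^((m:ℝ)+1/2) := by
    rw [Real.sqrt_eq_rpow, ← Real.rpow_natCast ((m:ℝ)+1) m,
      ← Real.rpow_add (by positivity : (0:ℝ) < (m:ℝ)+1)]
  have hZ : (0:ℝ) ≤ (2:ℝ)^(-(j:ℝ)*(2*(m:ℝ)+γ)) := Real.rpow_nonneg (by norm_num) _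
  have hW1 : (2:ℝ)^(-(j:ℝ)) ≤ 1 :=
    Real.rpow_le_one_of_one_le_of_nonpos one_le_two (neg_nonpos.mpr (Nat.cast_nonneg j))
  have hrγ : (0:ℝ) ≤ r ^ (-γ) := Real.rpow_nonneg hr.le _
  -- final numeric bounds
  have hT1 : (N.factorial:ℝ) * P^(-M) * A^m * 2^m * (2 * Real.sqrt A)
      ≤ c1 * r^(-γ) * (2:ℝ)^(-(j:ℝ)*(2*(m:ℝ)+γ)) := by
    have heq : (N.factorial:ℝ) * P^(-M) * A^m * 2^m * (2 * Real.sqrt A)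
        = (c1 * r^(-γ) * (2:ℝ)^(-(j:ℝ)*(2*(m:ℝ)+γ))) * (2:ℝ)^(-(j:ℝ)) := by
      rw [e3, eZW, eAm, esA, hc1_def]
      linear_combination
        ((N.factorial:ℝ) * α^(-M) * ((2:ℝ)^(-(j:ℝ)*(2*(m:ℝ)+γ)) * (2:ℝ)^(-(j:ℝ))) * 2^(m+1)
          * (((m:ℝ)+1)^m * Real.sqrt ((m:ℝ)+1))) * er
        + ((N.factorial:ℝ) * α^(-M) * ((2:ℝ)^(-(j:ℝ)*(2*(m:ℝ)+γ)) * (2:ℝ)^(-(j:ℝ))) * 2^(m+1)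
          * r^(-γ)) * em1
    rw [heq]
    exact mul_le_of_le_one_right (mul_nonneg (mul_nonneg hc1.le hrγ) hZ) hW1
  have hT2 : Kc * (N.factorial:ℝ) * (r^2)^m * P^(-M) * (2 * Real.sqrt B)
      = c2 * r^(-γ) * (2:ℝ)^(-(j:ℝ)*(2*(m:ℝ)+γ)) := by
    rw [e3, esB, er2m, hc2_def]
    linear_combination
      (2*Kc*(N.factorial:ℝ)*α^(-M) * ((r^2):ℝ)^(-M) * r^(2*m) * r) * eZ2
      + (2*Kc*(N.factorial:ℝ)*α^(-M) * (2:ℝ)^(-(j:ℝ)*(2*(m:ℝ)+γ))) * er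
  have hT3 : Kc * (r^2)^m * (B ^ (-((m:ℝ)+γ/2)) / ((m:ℝ)+γ/2))
      = c3 * r^(-γ) * (2:ℝ)^(-(j:ℝ)*(2*(m:ℝ)+γ)) := by
    rw [eB3, eZ3, er2m, hc3_def]
    linear_combination (Kc * (2:ℝ)^(-(j:ℝ)*(2*(m:ℝ)+γ)) / ((m:ℝ)+γ/2)) * er3
  have hfinal : (N.factorial:ℝ) * P^(-M) * A^m * 2^m * (2 * Real.sqrt A)
      + (Kc * (N.factorial:ℝ) * (r^2)^m * P^(-M) * (2 * Real.sqrt B)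
        + Kc * (r^2)^m * (B ^ (-((m:ℝ)+γ/2)) / ((m:ℝ)+γ/2)))
      ≤ (c1+c2+c3) * r^(-γ) * (2:ℝ)^(-(j:ℝ)*(2*(m:ℝ)+γ)) := by
    have hexpand : (c1+c2+c3) * r^(-γ) * (2:ℝ)^(-(j:ℝ)*(2*(m:ℝ)+γ))
        = c1 * r^(-γ) * (2:ℝ)^(-(j:ℝ)*(2*(m:ℝ)+γ))
          + (c2 * r^(-γ) * (2:ℝ)^(-(j:ℝ)*(2*(m:ℝ)+γ))
            + c3 * r^(-γ) * (2:ℝ)^(-(j:ℝ)*(2*(m:ℝ)+γ))) := by ring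
    rw [hexpand]
    exact add_le_add hT1 (add_le_add hT2.le hT3.le)
  have hT1n : (0:ℝ) ≤ (N.factorial:ℝ) * P^(-M) * A^m * 2^m * (2 * Real.sqrt A) :=
    mul_nonneg (mul_nonneg (mul_nonneg (mul_nonneg hNf.le (Real.rpow_nonneg hP.le _))
      (pow_nonneg hA.le m)) (by positivity)) (by positivity)
  have hT2n : (0:ℝ) ≤ Kc * (N.factorial:ℝ) * (r^2)^m * P^(-M) * (2 * Real.sqrt B) :=
    mul_nonneg hcc2 (by positivity)
  have hT3n : (0:ℝ) ≤ Kc * (r^2)^m * (B ^ (-((m:ℝ)+γ/2)) / ((m:ℝ)+γ/2)) :=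
    mul_nonneg hcc3 (div_nonneg (Real.rpow_nonneg hB.le _) hmγ.le)
  have hsplit : Set.Ioi (0:ℝ) = Set.Ioc 0 A ∪ (Set.Ioc A B₂ ∪ Set.Ioi B₂) := by
    rw [Set.Ioc_union_Ioi_eq_Ioi hAB2, Set.Ioc_union_Ioi_eq_Ioi hA.le]
  calc (∫⁻ t in Set.Ioi (0:ℝ), ENNReal.ofReal
        (|gker m (r ^ 2) t| * Real.exp (-P / t) * t ^ (-γ / 2) * (Real.sqrt t)⁻¹))
      = ∫⁻ t in Set.Ioc 0 A ∪ (Set.Ioc A B₂ ∪ Set.Ioi B₂), ENNReal.ofReal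
        (|gker m (r ^ 2) t| * Real.exp (-P / t) * t ^ (-γ / 2) * (Real.sqrt t)⁻¹) := by
        rw [← hsplit]
    _ ≤ (∫⁻ t in Set.Ioc (0:ℝ) A, ENNReal.ofReal
          (|gker m (r ^ 2) t| * Real.exp (-P / t) * t ^ (-γ / 2) * (Real.sqrt t)⁻¹))
        + ((∫⁻ t in Set.Ioc A B₂, ENNReal.ofReal
          (|gker m (r ^ 2) t| * Real.exp (-P / t) * t ^ (-γ / 2) * (Real.sqrt t)⁻¹))
        + (∫⁻ t in Set.Ioi B₂, ENNReal.ofReal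
          (|gker m (r ^ 2) t| * Real.exp (-P / t) * t ^ (-γ / 2) * (Real.sqrt t)⁻¹))) :=
        le_trans (lintegral_union_le _ _ _) (add_le_add le_rfl (lintegral_union_le _ _ _))
    _ ≤ ENNReal.ofReal ((N.factorial:ℝ) * P^(-M) * A^m * 2^m * (2 * Real.sqrt A))
        + (ENNReal.ofReal (Kc * (N.factorial:ℝ) * (r^2)^m * P^(-M) * (2 * Real.sqrt B))
        + ENNReal.ofReal (Kc * (r^2)^m * (B ^ (-((m:ℝ)+γ/2)) / ((m:ℝ)+γ/2)))) :=
        add_le_add hreg1 (add_le_add hreg2 hreg3)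
    _ = ENNReal.ofReal ((N.factorial:ℝ) * P^(-M) * A^m * 2^m * (2 * Real.sqrt A)
        + (Kc * (N.factorial:ℝ) * (r^2)^m * P^(-M) * (2 * Real.sqrt B)
          + Kc * (r^2)^m * (B ^ (-((m:ℝ)+γ/2)) / ((m:ℝ)+γ/2)))) := by
        rw [← ENNReal.ofReal_add hT2n hT3n, ← ENNReal.ofReal_add hT1n (add_nonneg hT2n hT3n)]
    _ ≤ ENNReal.ofReal ((c1+c2+c3) * r^(-γ) * (2:ℝ)^(-(j:ℝ)*(2*(m:ℝ)+γ))) :=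
        ENNReal.ofReal_le_ofReal hfinal
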